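/- (Relative free energy variational principle.) Let H₀ and W be Hermitian n×n complex matrices, set Γ₀ = exp(−H₀)/Tr[exp(−H₀)] and Γ_W = exp(−(H₀+W))/Tr[exp(−(H₀+W))]. Then for every positive definite n×n density matrix Γ, H(Γ, Γ₀) + Tr[WΓ] ≥ −log( Tr[exp(−(H₀+W))] / Tr[exp(−H₀)] ), with equality if and only if Γ = Γ_W. -/

import Mathlib

open Matrix
open scoped ComplexOrder

/-- Functional calculus for Hermitian matrices: apply `f` to the eigenvalues. -/
noncomputable def matFun {n : ℕ} (f : ℝ → ℝ) (M : Matrix (Fin n) (Fin n) ℂ) :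
    Matrix (Fin n) (Fin n) ℂ :=
  if h : M.IsHermitian then
    (h.eigenvectorUnitary : Matrix (Fin n) (Fin n) ℂ) *
      Matrix.diagonal (fun i => (f (h.eigenvalues i) : ℂ)) *
      star (h.eigenvectorUnitary : Matrix (Fin n) (Fin n) ℂ)
  else 0

/-- Matrix logarithm via the functional calculus. -/
noncomputable def matLog {n : ℕ} (M : Matrix (Fin n) (Fin n) ℂ) :
    Matrix (Fin n) (Fin n) ℂ :=
  matFun Real.log M

/-- The quantum relative entropy `H(Γ, Γ') = Tr[Γ (log Γ - log Γ')]`. -/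
noncomputable def relEnt {n : ℕ} (Γ Γ' : Matrix (Fin n) (Fin n) ℂ) : ℂ :=
  (Γ * (matLog Γ - matLog Γ')).trace

open Polynomial

section Aux
variable {n : ℕ}

lemma U_mul_star (U : Matrix.unitaryGroup (Fin n) ℂ) :
    (U : Matrix (Fin n) (Fin n) ℂ) * star (U : Matrix (Fin n) (Fin n) ℂ) = 1 := U.2.2

lemma U_star_mul (U : Matrix.unitaryGroup (Fin n) ℂ) :
    star (U : Matrix (Fin n) (Fin n) ℂ) * (U : Matrix (Fin n) (Fin n) ℂ) = 1 := U.2.1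

/-- Conjugation by a unitary matrix as an algebra homomorphism. -/
noncomputable def conjAH (U : Matrix.unitaryGroup (Fin n) ℂ) :
    Matrix (Fin n) (Fin n) ℂ →ₐ[ℂ] Matrix (Fin n) (Fin n) ℂ where
  toFun x := (U : Matrix (Fin n) (Fin n) ℂ) * x * star (U : Matrix (Fin n) (Fin n) ℂ)
  map_one' := by
    show (U : Matrix (Fin n) (Fin n) ℂ) * 1 * star (U : Matrix (Fin n) (Fin n) ℂ) = 1
    rw [mul_one, U_mul_star]
  map_mul' x y := by
    show (U : Matrix (Fin n) (Fin n) ℂ) * (x * y) * star (U : Matrix (Fin n) (Fin n) ℂ) = _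
    simp only [Matrix.mul_assoc]
    rw [← Matrix.mul_assoc (star (U : Matrix (Fin n) (Fin n) ℂ)) (U : Matrix (Fin n) (Fin n) ℂ),
      U_star_mul, Matrix.one_mul]
  map_zero' := by simp
  map_add' x y := by
    show (U : Matrix (Fin n) (Fin n) ℂ) * (x + y) * star (U : Matrix (Fin n) (Fin n) ℂ) = _
    rw [Matrix.mul_add, Matrix.add_mul]
  commutes' c := by
    show (U : Matrix (Fin n) (Fin n) ℂ) * algebraMap ℂ _ c * star (U : Matrix (Fin n) (Fin n) ℂ) = _
    simp only [Algebra.algebraMap_eq_smul_one]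
    rw [Matrix.mul_smul, mul_one, Matrix.smul_mul, U_mul_star]

lemma aeval_conj (U : Matrix.unitaryGroup (Fin n) ℂ) (d : Fin n → ℂ) (p : ℂ[X]) :
    aeval ((U : Matrix (Fin n) (Fin n) ℂ) * Matrix.diagonal d *
        star (U : Matrix (Fin n) (Fin n) ℂ)) p
      = (U : Matrix (Fin n) (Fin n) ℂ) * Matrix.diagonal (fun i => p.eval (d i)) *
        star (U : Matrix (Fin n) (Fin n) ℂ) := by
  have h1 : (U : Matrix (Fin n) (Fin n) ℂ) * Matrix.diagonal d *
      star (U : Matrix (Fin n) (Fin n) ℂ) = conjAH U (Matrix.diagonalAlgHom ℂ d) := rfl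
  have h2 : Matrix.diagonal d = Matrix.diagonalAlgHom ℂ d := rfl
  rw [h1, aeval_algHom_apply, aeval_algHom_apply]
  have h3 : aeval d p = fun i => p.eval (d i) := by
    funext i
    have h4 : (aeval d p) i = Pi.evalAlgHom ℂ (fun _ : Fin n => ℂ) i (aeval d p) := rfl
    rw [h4, ← aeval_algHom_apply]
    simp [aeval_def, eval₂_eq_eval_map]
  rw [h3]
  rfl

lemma matFun_conj (f : ℝ → ℝ) (U : Matrix.unitaryGroup (Fin n) ℂ) (d : Fin n → ℝ) :
    matFun f ((U : Matrix (Fin n) (Fin n) ℂ) * Matrix.diagonal (fun i => (d i : ℂ)) *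
        star (U : Matrix (Fin n) (Fin n) ℂ))
      = (U : Matrix (Fin n) (Fin n) ℂ) * Matrix.diagonal (fun i => (f (d i) : ℂ)) *
        star (U : Matrix (Fin n) (Fin n) ℂ) := by
  set M := (U : Matrix (Fin n) (Fin n) ℂ) * Matrix.diagonal (fun i => (d i : ℂ)) *
      star (U : Matrix (Fin n) (Fin n) ℂ) with hMdef
  have hdiag : (Matrix.diagonal (fun i => (d i : ℂ))).IsHermitian := by
    rw [Matrix.isHermitian_diagonal_iff]
    intro i
    exact Complex.conj_ofReal (d i)
  have hM : M.IsHermitian := by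
    have := Matrix.isHermitian_mul_mul_conjTranspose (U : Matrix (Fin n) (Fin n) ℂ) hdiag
    rwa [← Matrix.star_eq_conjTranspose] at this
  rw [matFun, dif_pos hM]
  classical
  set s : Finset ℝ := Finset.image d Finset.univ ∪ Finset.image hM.eigenvalues Finset.univ with hs
  set p : ℝ[X] := Lagrange.interpolate s id f with hp
  have hinj : Set.InjOn id (s : Set ℝ) := Function.injective_id.injOn
  have hev : ∀ x ∈ s, p.eval x = f x := by
    intro x hx
    have := Lagrange.eval_interpolate_at_node f hinj hx
    simpa [hp] using this
  set q : ℂ[X] := p.map (algebraMap ℝ ℂ) with hqdef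
  have hq : ∀ x : ℝ, x ∈ s → q.eval (x : ℂ) = ((f x : ℝ) : ℂ) := by
    intro x hx
    have h1 : q.eval ((algebraMap ℝ ℂ) x) = (algebraMap ℝ ℂ) (p.eval x) := by
      rw [hqdef, eval_map, eval₂_at_apply]
    rw [hev x hx] at h1
    simpa using h1
  have e1 := aeval_conj U (fun i => (d i : ℂ)) q
  have e2 := aeval_conj hM.eigenvectorUnitary (fun i => ((hM.eigenvalues i : ℝ) : ℂ)) q
  have hspec : M = (hM.eigenvectorUnitary : Matrix (Fin n) (Fin n) ℂ) *
      Matrix.diagonal (fun i => ((hM.eigenvalues i : ℝ) : ℂ)) *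
      star (hM.eigenvectorUnitary : Matrix (Fin n) (Fin n) ℂ) := by
    have := hM.spectral_theorem
    simpa [Function.comp_def] using this
  rw [← hspec] at e2
  rw [← hMdef] at e1
  have hd_mem : ∀ i, d i ∈ s := fun i => Finset.mem_union_left _
    (Finset.mem_image_of_mem d (Finset.mem_univ i))
  have he_mem : ∀ i, hM.eigenvalues i ∈ s := fun i => Finset.mem_union_right _
    (Finset.mem_image_of_mem _ (Finset.mem_univ i))
  rw [e1] at e2
  have hfd : (fun i => q.eval ((d i : ℝ) : ℂ)) = fun i => ((f (d i) : ℝ) : ℂ) := by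
    funext i; exact hq _ (hd_mem i)
  have hfe : (fun i => q.eval ((hM.eigenvalues i : ℝ) : ℂ))
      = fun i => ((f (hM.eigenvalues i) : ℝ) : ℂ) := by
    funext i; exact hq _ (he_mem i)
  rw [hfd, hfe] at e2
  exact e2.symm

lemma posDef_conj (U : Matrix.unitaryGroup (Fin n) ℂ) {v : Fin n → ℝ} (hv : ∀ i, 0 < v i) :
    ((U : Matrix (Fin n) (Fin n) ℂ) * Matrix.diagonal (fun i => (v i : ℂ)) *
      star (U : Matrix (Fin n) (Fin n) ℂ)).PosDef := by
  have hD : (Matrix.diagonal (fun i => ((v i : ℝ) : ℂ))).PosDef :=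
    Matrix.posDef_diagonal_iff.mpr fun i => by
      rw [Complex.zero_lt_real]; exact hv i
  rw [Matrix.posDef_iff_dotProduct_mulVec]
  constructor
  · have := Matrix.isHermitian_mul_mul_conjTranspose (U : Matrix (Fin n) (Fin n) ℂ) hD.1
    rwa [← Matrix.star_eq_conjTranspose] at this
  · intro x hx
    set y := star (U : Matrix (Fin n) (Fin n) ℂ) *ᵥ x with hy
    have hyne : y ≠ 0 := by
      intro h0
      apply hx
      have : (U : Matrix (Fin n) (Fin n) ℂ) *ᵥ y = 0 := by rw [h0, Matrix.mulVec_zero]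
      rwa [hy, Matrix.mulVec_mulVec, U_mul_star, Matrix.one_mulVec] at this
    have key : star x ⬝ᵥ (((U : Matrix (Fin n) (Fin n) ℂ) * Matrix.diagonal (fun i => (v i : ℂ)) *
        star (U : Matrix (Fin n) (Fin n) ℂ)) *ᵥ x)
        = star y ⬝ᵥ (Matrix.diagonal (fun i => ((v i : ℝ) : ℂ)) *ᵥ y) := by
      rw [← Matrix.mulVec_mulVec, ← Matrix.mulVec_mulVec, Matrix.dotProduct_mulVec (star x)]
      congr 1
      rw [hy, Matrix.star_mulVec, Matrix.star_eq_conjTranspose, Matrix.conjTranspose_conjTranspose]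
    rw [key]
    exact hD.dotProduct_mulVec_pos hyne

lemma exp_unitary_conj (U : Matrix.unitaryGroup (Fin n) ℂ) (A : Matrix (Fin n) (Fin n) ℂ) :
    NormedSpace.exp ((U : Matrix (Fin n) (Fin n) ℂ) * A * star (U : Matrix (Fin n) (Fin n) ℂ))
      = (U : Matrix (Fin n) (Fin n) ℂ) * NormedSpace.exp A *
        star (U : Matrix (Fin n) (Fin n) ℂ) := by
  have hinv : (U : Matrix (Fin n) (Fin n) ℂ)⁻¹ = star (U : Matrix (Fin n) (Fin n) ℂ) :=
    Matrix.inv_eq_left_inv (U_star_mul U)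
  rw [← hinv]
  exact Matrix.exp_conj (U : Matrix (Fin n) (Fin n) ℂ) A (Unitary.toUnits U).isUnit

lemma exp_neg_herm {H : Matrix (Fin n) (Fin n) ℂ} (hH : H.IsHermitian) :
    NormedSpace.exp (-H) = (hH.eigenvectorUnitary : Matrix (Fin n) (Fin n) ℂ) *
      Matrix.diagonal (fun i => ((Real.exp (-(hH.eigenvalues i)) : ℝ) : ℂ)) *
      star (hH.eigenvectorUnitary : Matrix (Fin n) (Fin n) ℂ) := by
  have hspec : H = (hH.eigenvectorUnitary : Matrix (Fin n) (Fin n) ℂ) *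
      Matrix.diagonal (fun i => ((hH.eigenvalues i : ℝ) : ℂ)) *
      star (hH.eigenvectorUnitary : Matrix (Fin n) (Fin n) ℂ) := by
    have := hH.spectral_theorem
    simpa [Function.comp_def] using this
  have hneg : -H = (hH.eigenvectorUnitary : Matrix (Fin n) (Fin n) ℂ) *
      Matrix.diagonal (fun i => (-(hH.eigenvalues i : ℝ) : ℂ)) *
      star (hH.eigenvectorUnitary : Matrix (Fin n) (Fin n) ℂ) := by
    conv_lhs => rw [hspec]
    rw [← Matrix.diagonal_neg, ← Matrix.neg_mul, ← Matrix.mul_neg]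
  rw [hneg, exp_unitary_conj, Matrix.exp_diagonal]
  have : (NormedSpace.exp fun i => (-(hH.eigenvalues i : ℝ) : ℂ))
      = fun i => ((Real.exp (-(hH.eigenvalues i)) : ℝ) : ℂ) := by
    funext i
    rw [Pi.coe_exp, ← Complex.exp_eq_exp_ℂ, ← Complex.ofReal_neg, ← Complex.ofReal_exp]
  rw [this]

lemma herm_spec {H : Matrix (Fin n) (Fin n) ℂ} (hH : H.IsHermitian) :
    H = (hH.eigenvectorUnitary : Matrix (Fin n) (Fin n) ℂ) *
      Matrix.diagonal (fun i => ((hH.eigenvalues i : ℝ) : ℂ)) *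
      star (hH.eigenvectorUnitary : Matrix (Fin n) (Fin n) ℂ) := by
  have := hH.spectral_theorem
  simpa [Function.comp_def] using this

lemma herm_spec_neg {H : Matrix (Fin n) (Fin n) ℂ} (hH : H.IsHermitian) :
    -H = (hH.eigenvectorUnitary : Matrix (Fin n) (Fin n) ℂ) *
      Matrix.diagonal (fun i => (-(hH.eigenvalues i : ℝ) : ℂ)) *
      star (hH.eigenvectorUnitary : Matrix (Fin n) (Fin n) ℂ) := by
  conv_lhs => rw [herm_spec hH]
  rw [← Matrix.diagonal_neg, ← Matrix.neg_mul, ← Matrix.mul_neg]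

lemma gibbs {H : Matrix (Fin n) (Fin n) ℂ} (hH : H.IsHermitian) (hn : 0 < n) :
    ∃ z : ℝ, 0 < z ∧ (NormedSpace.exp (-H)).trace = (z : ℂ) ∧
      ((((NormedSpace.exp (-H)).trace)⁻¹ • NormedSpace.exp (-H)).PosDef) ∧
      ((((NormedSpace.exp (-H)).trace)⁻¹ • NormedSpace.exp (-H)).trace = 1) ∧
      matLog (((NormedSpace.exp (-H)).trace)⁻¹ • NormedSpace.exp (-H))
        = -H - ((Real.log z : ℝ) : ℂ) • 1 := by
  classical
  set U := hH.eigenvectorUnitary with hU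
  set lam := hH.eigenvalues with hlam
  set z : ℝ := ∑ i, Real.exp (-(lam i)) with hzdef
  have hz : 0 < z := Finset.sum_pos (fun i _ => Real.exp_pos _)
    (Finset.univ_nonempty_iff.mpr (Fin.pos_iff_nonempty.mp hn))
  have hE := exp_neg_herm hH
  have htr : (NormedSpace.exp (-H)).trace = (z : ℂ) := by
    rw [hE, Matrix.trace_mul_cycle, U_star_mul, Matrix.one_mul, Matrix.trace_diagonal]
    norm_cast
  have hsm : ((NormedSpace.exp (-H)).trace)⁻¹ • NormedSpace.exp (-H)
      = (U : Matrix (Fin n) (Fin n) ℂ) *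
        Matrix.diagonal (fun i => ((z⁻¹ * Real.exp (-(lam i)) : ℝ) : ℂ)) *
        star (U : Matrix (Fin n) (Fin n) ℂ) := by
    rw [htr, hE]
    have hfun : (fun i => ((z⁻¹ * Real.exp (-(lam i)) : ℝ) : ℂ))
        = ((z : ℂ))⁻¹ • fun i => ((Real.exp (-(lam i)) : ℝ) : ℂ) := by
      funext i
      simp only [Pi.smul_apply, smul_eq_mul]
      push_cast
      ring
    rw [hfun, Matrix.diagonal_smul]
    simp only [Matrix.mul_smul, Matrix.smul_mul]
    rfl
  refine ⟨z, hz, htr, ?_, ?_, ?_⟩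
  · rw [hsm]
    exact posDef_conj U (fun i => by positivity)
  · rw [Matrix.trace_smul, htr, smul_eq_mul, inv_mul_cancel₀]
    exact_mod_cast hz.ne'
  · rw [hsm, matLog, matFun_conj]
    have hlog : (fun i => ((Real.log (z⁻¹ * Real.exp (-(lam i))) : ℝ) : ℂ))
        = fun i => ((-(lam i) - Real.log z : ℝ) : ℂ) := by
      funext i
      rw [Real.log_mul (by positivity) (Real.exp_ne_zero _), Real.log_inv, Real.log_exp]
      push_cast
      ring
    rw [hlog]
    have hdiag : Matrix.diagonal (fun i => ((-(lam i) - Real.log z : ℝ) : ℂ)) =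
        Matrix.diagonal (fun i => (-(lam i : ℝ) : ℂ)) - ((Real.log z : ℝ) : ℂ) • 1 := by
      ext i j
      by_cases h : i = j
      · subst h
        simp only [Matrix.diagonal_apply_eq, Matrix.sub_apply, Matrix.smul_apply,
          Matrix.one_apply_eq, smul_eq_mul, mul_one]
        push_cast
        ring
      · simp [Matrix.diagonal_apply_ne _ h, Matrix.one_apply_ne h]
    rw [hdiag, Matrix.mul_sub, Matrix.sub_mul, ← herm_spec_neg hH]
    congr 1
    rw [Matrix.mul_smul, mul_one, Matrix.smul_mul, U_mul_star]

lemma star_mul_cancel (U : Matrix.unitaryGroup (Fin n) ℂ) (X : Matrix (Fin n) (Fin n) ℂ) :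
    star (U : Matrix (Fin n) (Fin n) ℂ) * ((U : Matrix (Fin n) (Fin n) ℂ) * X) = X := by
  rw [← Matrix.mul_assoc, U_star_mul, Matrix.one_mul]

lemma mul_star_cancel (U : Matrix.unitaryGroup (Fin n) ℂ) (X : Matrix (Fin n) (Fin n) ℂ) :
    (U : Matrix (Fin n) (Fin n) ℂ) * (star (U : Matrix (Fin n) (Fin n) ℂ) * X) = X := by
  rw [← Matrix.mul_assoc, U_mul_star, Matrix.one_mul]

lemma traceConjU (U : Matrix.unitaryGroup (Fin n) ℂ) (A : Matrix (Fin n) (Fin n) ℂ) :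
    ((U : Matrix (Fin n) (Fin n) ℂ) * A * star (U : Matrix (Fin n) (Fin n) ℂ)).trace = A.trace := by
  rw [Matrix.trace_mul_cycle, U_star_mul, Matrix.one_mul]

lemma conj_mul_conj (U : Matrix.unitaryGroup (Fin n) ℂ) (A B : Matrix (Fin n) (Fin n) ℂ) :
    ((U : Matrix (Fin n) (Fin n) ℂ) * A * star (U : Matrix (Fin n) (Fin n) ℂ)) *
      ((U : Matrix (Fin n) (Fin n) ℂ) * B * star (U : Matrix (Fin n) (Fin n) ℂ))
    = (U : Matrix (Fin n) (Fin n) ℂ) * (A * B) * star (U : Matrix (Fin n) (Fin n) ℂ) := by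
  simp only [Matrix.mul_assoc]
  rw [star_mul_cancel]

lemma trace_dsd (B : Matrix (Fin n) (Fin n) ℂ) (D E : Fin n → ℂ) :
    (Matrix.diagonal D * star B * Matrix.diagonal E * B).trace
      = ∑ i, ∑ j, D i * E j * ((Complex.normSq (B j i) : ℝ) : ℂ) := by
  rw [Matrix.trace]
  refine Finset.sum_congr rfl fun i _ => ?_
  rw [Matrix.diag_apply, Matrix.mul_apply]
  refine Finset.sum_congr rfl fun j _ => ?_
  rw [Matrix.mul_diagonal, Matrix.diagonal_mul, Matrix.star_eq_conjTranspose,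
    Matrix.conjTranspose_apply]
  have h1 : D i * star (B j i) * E j * B j i = D i * E j * (B j i * star (B j i)) := by ring
  rw [h1, RCLike.star_def, Complex.mul_conj]

lemma trace_conj_diag (U : Matrix.unitaryGroup (Fin n) ℂ) (v : Fin n → ℂ) :
    ((U : Matrix (Fin n) (Fin n) ℂ) * Matrix.diagonal v *
      star (U : Matrix (Fin n) (Fin n) ℂ)).trace = ∑ i, v i := by
  rw [traceConjU, Matrix.trace_diagonal]

lemma log_ineq {a b : ℝ} (ha : 0 < a) (hb : 0 < b) :
    a - b ≤ a * (Real.log a - Real.log b) ∧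
      (a * (Real.log a - Real.log b) = a - b ↔ a = b) := by
  have hlog : Real.log (b / a) = Real.log b - Real.log a := Real.log_div hb.ne' ha.ne'
  have h2 : a * (b / a - 1) = b - a := by field_simp
  have h1 : Real.log (b / a) ≤ b / a - 1 := Real.log_le_sub_one_of_pos (div_pos hb ha)
  constructor
  · have := mul_le_mul_of_nonneg_left h1 ha.le
    rw [hlog] at this
    nlinarith [this]
  · constructor
    · intro heq
      by_contra hne
      have hne' : b / a ≠ 1 := by
        intro h
        rw [div_eq_one_iff_eq ha.ne'] at h
        exact hne h.symm
      have h3 := Real.log_lt_sub_one_of_pos (div_pos hb ha) hne'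
      rw [hlog] at h3
      have := mul_lt_mul_of_pos_left h3 ha
      nlinarith
    · intro h
      subst h
      ring

lemma klein {ρ σ : Matrix (Fin n) (Fin n) ℂ} (hρ : ρ.PosDef) (hσ : σ.PosDef)
    (hρt : ρ.trace = 1) (hσt : σ.trace = 1) :
    (∃ S : ℝ, 0 ≤ S ∧ relEnt ρ σ = (S : ℂ)) ∧ (relEnt ρ σ = 0 ↔ ρ = σ) := by
  classical
  have hρh : ρ.IsHermitian := hρ.1
  have hσh : σ.IsHermitian := hσ.1
  set U := hρh.eigenvectorUnitary with hUdef
  set V := hσh.eigenvectorUnitary with hVdef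
  set p := hρh.eigenvalues with hpdef
  set q := hσh.eigenvalues with hqdef
  have hp : ∀ i, 0 < p i := hρ.eigenvalues_pos
  have hq : ∀ i, 0 < q i := hσ.eigenvalues_pos
  have hρspec : ρ = (U : Matrix (Fin n) (Fin n) ℂ) *
      Matrix.diagonal (fun i => ((p i : ℝ) : ℂ)) * star (U : Matrix (Fin n) (Fin n) ℂ) :=
    herm_spec hρh
  have hσspec : σ = (V : Matrix (Fin n) (Fin n) ℂ) *
      Matrix.diagonal (fun i => ((q i : ℝ) : ℂ)) * star (V : Matrix (Fin n) (Fin n) ℂ) :=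
    herm_spec hσh
  set B := star (V : Matrix (Fin n) (Fin n) ℂ) * (U : Matrix (Fin n) (Fin n) ℂ) with hBdef
  set P : Fin n → Fin n → ℝ := fun j i => Complex.normSq (B j i) with hPdef
  have hstarB : star B = star (U : Matrix (Fin n) (Fin n) ℂ) * (V : Matrix (Fin n) (Fin n) ℂ) := by
    rw [hBdef, Matrix.star_mul, star_star]
  have hLρ : matLog ρ = (U : Matrix (Fin n) (Fin n) ℂ) *
      Matrix.diagonal (fun i => ((Real.log (p i) : ℝ) : ℂ)) *
      star (U : Matrix (Fin n) (Fin n) ℂ) := by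
    have h0 : matLog ρ = matFun Real.log ρ := rfl
    rw [h0]
    conv_lhs => rw [hρspec]
    exact matFun_conj _ _ _
  have hLσ : matLog σ = (V : Matrix (Fin n) (Fin n) ℂ) *
      Matrix.diagonal (fun i => ((Real.log (q i) : ℝ) : ℂ)) *
      star (V : Matrix (Fin n) (Fin n) ℂ) := by
    have h0 : matLog σ = matFun Real.log σ := rfl
    rw [h0]
    conv_lhs => rw [hσspec]
    exact matFun_conj _ _ _
  have hT1 : (ρ * matLog ρ).trace = ((∑ i, p i * Real.log (p i) : ℝ) : ℂ) := by
    rw [hLρ]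
    conv_lhs => rw [hρspec]
    rw [conj_mul_conj, Matrix.diagonal_mul_diagonal, trace_conj_diag]
    push_cast
    rfl
  have hmat2 : ρ * matLog σ = (U : Matrix (Fin n) (Fin n) ℂ) *
      (Matrix.diagonal (fun i => ((p i : ℝ) : ℂ)) * star B *
        Matrix.diagonal (fun j => ((Real.log (q j) : ℝ) : ℂ)) * B) *
      star (U : Matrix (Fin n) (Fin n) ℂ) := by
    conv_lhs => rw [hρspec, hLσ]
    rw [hstarB, hBdef]
    simp only [Matrix.mul_assoc, U_mul_star, U_star_mul, Matrix.mul_one, Matrix.one_mul,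
      mul_star_cancel, star_mul_cancel]
  have hT2 : (ρ * matLog σ).trace
      = ∑ i, ∑ j, ((p i : ℝ) : ℂ) * ((Real.log (q j) : ℝ) : ℂ) * ((P j i : ℝ) : ℂ) := by
    rw [hmat2, traceConjU, trace_dsd]
  set S : ℝ := (∑ i, p i * Real.log (p i)) - ∑ i, ∑ j, p i * Real.log (q j) * P j i with hSdef
  have hrel : relEnt ρ σ = (S : ℂ) := by
    rw [relEnt, Matrix.mul_sub, Matrix.trace_sub, hT1, hT2, hSdef]
    push_cast
    rfl
  have hBB : B * star B = 1 := by
    rw [hstarB, hBdef, Matrix.mul_assoc, mul_star_cancel, U_star_mul]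
  have hBB' : star B * B = 1 := by
    rw [hstarB, hBdef, Matrix.mul_assoc, mul_star_cancel, U_star_mul]
  have hrow : ∀ j, ∑ i, P j i = 1 := by
    intro j
    have h : (B * star B) j j = (1 : Matrix (Fin n) (Fin n) ℂ) j j := by rw [hBB]
    rw [Matrix.mul_apply, Matrix.one_apply_eq] at h
    have h2 : ∑ k, ((P j k : ℝ) : ℂ) = 1 := by
      rw [← h]
      refine Finset.sum_congr rfl fun k _ => ?_
      rw [Matrix.star_apply, RCLike.star_def]
      exact (Complex.mul_conj _).symm
    exact_mod_cast h2
  have hcol : ∀ i, ∑ j, P j i = 1 := by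
    intro i
    have h : (star B * B) i i = (1 : Matrix (Fin n) (Fin n) ℂ) i i := by rw [hBB']
    rw [Matrix.mul_apply, Matrix.one_apply_eq] at h
    have h2 : ∑ k, ((P k i : ℝ) : ℂ) = 1 := by
      rw [← h]
      refine Finset.sum_congr rfl fun k _ => ?_
      rw [Matrix.star_apply, RCLike.star_def, mul_comm]
      exact (Complex.mul_conj _).symm
    exact_mod_cast h2
  have hp1 : ∑ i, p i = 1 := by
    have h := hρt
    rw [hρspec, trace_conj_diag] at h
    exact_mod_cast h
  have hq1 : ∑ j, q j = 1 := by
    have h := hσt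
    rw [hσspec, trace_conj_diag] at h
    exact_mod_cast h
  set t : Fin n → Fin n → ℝ :=
    fun i j => P j i * ((p i * (Real.log (p i) - Real.log (q j))) - (p i - q j)) with htdef
  have ht_nonneg : ∀ i j, 0 ≤ t i j := fun i j =>
    mul_nonneg (Complex.normSq_nonneg _) (sub_nonneg.mpr (log_ineq (hp i) (hq j)).1)
  have hsum_t : ∑ i, ∑ j, t i j = S := by
    have expand : ∀ i j, t i j = P j i * (p i * Real.log (p i)) -
        p i * Real.log (q j) * P j i - P j i * p i + P j i * q j := by
      intro i j
      rw [htdef]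
      ring
    have E1 : ∑ i, ∑ j, P j i * (p i * Real.log (p i)) = ∑ i, p i * Real.log (p i) :=
      Finset.sum_congr rfl fun i _ => by rw [← Finset.sum_mul, hcol i, one_mul]
    have E3 : ∑ i, ∑ j, P j i * p i = 1 := by
      rw [Finset.sum_congr rfl fun i (_ : i ∈ Finset.univ) =>
        (by rw [← Finset.sum_mul, hcol i, one_mul] : ∑ j, P j i * p i = p i)]
      exact hp1
    have E4 : ∑ i, ∑ j, P j i * q j = 1 := by
      rw [Finset.sum_comm]
      rw [Finset.sum_congr rfl fun j (_ : j ∈ Finset.univ) =>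
        (by rw [← Finset.sum_mul, hrow j, one_mul] : ∑ i, P j i * q j = q j)]
      exact hq1
    simp only [expand, Finset.sum_sub_distrib, Finset.sum_add_distrib]
    rw [E1, E3, E4, hSdef]
    ring
  have hnn : 0 ≤ S := by
    rw [← hsum_t]
    exact Finset.sum_nonneg fun i _ => Finset.sum_nonneg fun j _ => ht_nonneg i j
  refine ⟨⟨S, hnn, hrel⟩, ?_, ?_⟩
  · intro h0
    have hS0 : S = 0 := by
      rw [hrel] at h0
      exact_mod_cast h0
    rw [← hsum_t] at hS0
    have h1 := (Finset.sum_eq_zero_iff_of_nonneg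
      (fun i _ => Finset.sum_nonneg fun j _ => ht_nonneg i j)).mp hS0
    have hall : ∀ i j, t i j = 0 := by
      intro i j
      have h2 := (Finset.sum_eq_zero_iff_of_nonneg (fun j _ => ht_nonneg i j)).mp
        (h1 i (Finset.mem_univ i))
      exact h2 j (Finset.mem_univ j)
    have key : ∀ i j, B j i ≠ 0 → (p i : ℂ) = (q j : ℂ) := by
      intro i j hBne
      have hPpos : P j i ≠ 0 := fun h => hBne (Complex.normSq_eq_zero.mp h)
      have ht0 := hall i j
      rw [htdef] at ht0
      have h3 : p i * (Real.log (p i) - Real.log (q j)) - (p i - q j) = 0 := by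
        rcases mul_eq_zero.mp ht0 with h | h
        · exact absurd h hPpos
        · exact h
      have h4 : p i = q j := (log_ineq (hp i) (hq j)).2.mp (by linarith)
      exact_mod_cast h4
    have hcomm : B * Matrix.diagonal (fun i => ((p i : ℝ) : ℂ))
        = Matrix.diagonal (fun j => ((q j : ℝ) : ℂ)) * B := by
      ext j i
      rw [Matrix.mul_diagonal, Matrix.diagonal_mul]
      by_cases hB0 : B j i = 0
      · rw [hB0, mul_zero, zero_mul]
      · rw [key i j hB0, mul_comm]
    have hUVB : (U : Matrix (Fin n) (Fin n) ℂ) = (V : Matrix (Fin n) (Fin n) ℂ) * B := by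
      rw [hBdef, mul_star_cancel]
    rw [hρspec, hσspec, hUVB, Matrix.star_mul]
    calc (V : Matrix (Fin n) (Fin n) ℂ) * B * Matrix.diagonal (fun i => ((p i : ℝ) : ℂ)) *
          (star B * star (V : Matrix (Fin n) (Fin n) ℂ))
        = (V : Matrix (Fin n) (Fin n) ℂ) * ((B * Matrix.diagonal (fun i => ((p i : ℝ) : ℂ)) *
            star B) * star (V : Matrix (Fin n) (Fin n) ℂ)) := by
          simp only [Matrix.mul_assoc]
      _ = (V : Matrix (Fin n) (Fin n) ℂ) * ((Matrix.diagonal (fun j => ((q j : ℝ) : ℂ)) *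
            (B * star B)) * star (V : Matrix (Fin n) (Fin n) ℂ)) := by
          rw [hcomm]
          simp only [Matrix.mul_assoc]
      _ = (V : Matrix (Fin n) (Fin n) ℂ) * Matrix.diagonal (fun j => ((q j : ℝ) : ℂ)) *
            star (V : Matrix (Fin n) (Fin n) ℂ) := by
          rw [hBB, Matrix.mul_one, Matrix.mul_assoc]
  · intro h
    rw [relEnt, h, sub_self, Matrix.mul_zero, Matrix.trace_zero]

end Aux

/-- **Relative free energy variational principle.**  With `Γ₀ = exp(-H₀)/Tr[exp(-H₀)]` and
`Γ_W = exp(-(H₀+W))/Tr[exp(-(H₀+W))]`, every positive definite density matrix `Γ` satisfies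
`H(Γ,Γ₀) + Tr[WΓ] ≥ -log(Tr[exp(-(H₀+W))]/Tr[exp(-H₀)])`, with equality iff `Γ = Γ_W`. -/
theorem relative_free_energy_variational_principle {n : ℕ}
    (H₀ W : Matrix (Fin n) (Fin n) ℂ) (hH₀ : H₀.IsHermitian) (hW : W.IsHermitian)
    (Γ₀ ΓW : Matrix (Fin n) (Fin n) ℂ)
    (hΓ₀ : Γ₀ = ((NormedSpace.exp (-H₀)).trace)⁻¹ • NormedSpace.exp (-H₀))
    (hΓW : ΓW = ((NormedSpace.exp (-(H₀ + W))).trace)⁻¹ • NormedSpace.exp (-(H₀ + W)))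
    (Γ : Matrix (Fin n) (Fin n) ℂ) (hΓ : Γ.PosDef) (hΓtr : Γ.trace = 1) :
    -(Complex.log ((NormedSpace.exp (-(H₀ + W))).trace / (NormedSpace.exp (-H₀)).trace)) ≤
        relEnt Γ Γ₀ + (W * Γ).trace ∧
      (relEnt Γ Γ₀ + (W * Γ).trace =
          -(Complex.log
            ((NormedSpace.exp (-(H₀ + W))).trace / (NormedSpace.exp (-H₀)).trace)) ↔
        Γ = ΓW) := by
  rcases Nat.eq_zero_or_pos n with hn | hn
  · exfalso
    subst hn
    have h0 : Γ.trace = 0 := by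
      rw [Matrix.trace]
      simp
    rw [hΓtr] at h0
    exact one_ne_zero h0
  obtain ⟨z0, hz0, htr0, hpd0, htr10, hlog0⟩ := gibbs hH₀ hn
  obtain ⟨zW, hzW, htrW, hpdW, htr1W, hlogW⟩ := gibbs (hH₀.add hW) hn
  rw [← hΓ₀] at hlog0 hpd0 htr10
  rw [← hΓW] at hlogW hpdW htr1W
  have expand : ∀ (A : Matrix (Fin n) (Fin n) ℂ) (a : ℂ),
      (Γ * (matLog Γ - (-A - a • 1))).trace
        = (Γ * matLog Γ).trace + (Γ * A).trace + a := by
    intro A a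
    have h1 : Γ * (matLog Γ - (-A - a • 1)) = Γ * matLog Γ + Γ * A + a • Γ := by
      rw [Matrix.mul_sub, Matrix.mul_sub, Matrix.mul_neg, Matrix.mul_smul, Matrix.mul_one]
      abel
    rw [h1, Matrix.trace_add, Matrix.trace_add, Matrix.trace_smul, hΓtr, smul_eq_mul, mul_one]
  have hkey : relEnt Γ Γ₀ + (W * Γ).trace
      = relEnt Γ ΓW + (((Real.log z0 : ℝ) : ℂ) - ((Real.log zW : ℝ) : ℂ)) := by
    rw [relEnt, relEnt, hlog0, hlogW, expand, expand]
    rw [Matrix.mul_add, Matrix.trace_add, Matrix.trace_mul_comm W Γ]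
    ring
  have hRHS : -(Complex.log
      ((NormedSpace.exp (-(H₀ + W))).trace / (NormedSpace.exp (-H₀)).trace))
      = ((Real.log z0 : ℝ) : ℂ) - ((Real.log zW : ℝ) : ℂ) := by
    rw [htrW, htr0, ← Complex.ofReal_div,
      ← Complex.ofReal_log (le_of_lt (div_pos hzW hz0)),
      Real.log_div hzW.ne' hz0.ne']
    push_cast
    ring
  obtain ⟨⟨S, hS, hrelS⟩, hiff⟩ := klein hΓ hpdW hΓtr htr1W
  rw [hRHS, hkey]
  constructor
  · rw [hrelS]
    have h2 : (0 : ℂ) ≤ (S : ℂ) := Complex.zero_le_real.mpr hS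
    calc ((Real.log z0 : ℝ) : ℂ) - ((Real.log zW : ℝ) : ℂ)
        = 0 + (((Real.log z0 : ℝ) : ℂ) - ((Real.log zW : ℝ) : ℂ)) := by ring
      _ ≤ (S : ℂ) + (((Real.log z0 : ℝ) : ℂ) - ((Real.log zW : ℝ) : ℂ)) := by
          exact add_le_add_left h2 _
  · rw [add_eq_right]
    exact hiff
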